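/- Let 0 < α < 1/2, let N be an even positive integer, h = 2π/(2N+1), and consider the α-perturbed nodes x̃_0 = 0; x̃_j = (j−α)h for −N ≤ j ≤ −1 with j even, x̃_j = (j+α)h for −N ≤ j ≤ −1 with j odd; x̃_j = (j−α)h for 1 ≤ j ≤ N with j odd, x̃_j = (j+α)h for 1 ≤ j ≤ N with j even. Let ℓ₀(x) = ∏_{j=−N, j≠0}^{N} sin((x − x̃_j)/2) / sin((x̃_0 − x̃_j)/2) be the trigonometric Lagrange basis polynomial at x̃_0. Then for every integer k with −N ≤ k ≤ N and k ≠ 0, ℓ₀(kh) ≤ 0 and |ℓ₀(kh)| ≥ sin(αh/2) / sin((|k| + α)h/2). -/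
import Mathlib


open Real Finset

/-- The α-perturbed nodes obtained by maximally perturbing the equally spaced grid in an
alternating fashion. -/
noncomputable def altNodes (N : ℕ) (α : ℝ) : ℤ → ℝ := fun j =>
  if j = 0 then 0
  else if (Even j ∧ j < 0) ∨ (Odd j ∧ 0 < j) then ((j : ℝ) - α) * (2*π/(2*N+1))
  else ((j : ℝ) + α) * (2*π/(2*N+1))

/-- The trigonometric Lagrange basis polynomial at the node `x̃₀ = 0` of the alternating
perturbed grid. -/
noncomputable def ell0 (N : ℕ) (α : ℝ) (x : ℝ) : ℝ :=
  ∏ j ∈ (Finset.Icc (-(N:ℤ)) (N:ℤ)).erase 0,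
    Real.sin ((x - altNodes N α j)/2) / Real.sin ((altNodes N α 0 - altNodes N α j)/2)

/-- sign (-1)^j as a real number -/

noncomputable def ee (j : ℤ) : ℝ := if Even j then 1 else -1

/-- the half-spacing θ = π/(2N+1) -/
noncomputable def th (N : ℕ) : ℝ := Real.pi / (2*N+1)

/-- perturbed sine values t_j = sin(β_j θ) -/
noncomputable def tt (N : ℕ) (α : ℝ) (j : ℤ) : ℝ := Real.sin (((j:ℝ) + ee j * α) * th N)

/-- opposite perturbation F_j = sin((j - (-1)^j α) θ) -/
noncomputable def FF (N : ℕ) (α : ℝ) (j : ℤ) : ℝ := Real.sin (((j:ℝ) - ee j * α) * th N)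

lemma ee_even {j : ℤ} (h : Even j) : ee j = 1 := by simp [ee, h]

lemma ee_odd {j : ℤ} (h : Odd j) : ee j = -1 := by
  simp [ee, Int.not_even_iff_odd.2 h]

lemma ee_eq (j : ℤ) : ee j = 1 ∨ ee j = -1 := by
  unfold ee; split <;> simp

lemma ee_add (a b : ℤ) : ee (a + b) = ee a * ee b := by
  unfold ee
  by_cases ha : Even a <;> by_cases hb : Even b <;>
    simp [ha, hb, Int.even_add, iff_iff_implies_and_implies]

lemma ee_neg (a : ℤ) : ee (-a) = ee a := by unfold ee; simp

lemma ee_sub (a b : ℤ) : ee (a - b) = ee a * ee b := by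
  rw [sub_eq_add_neg, ee_add, ee_neg]

lemma ee_mul_self (a : ℤ) : ee a * ee a = 1 := by
  rcases ee_eq a with h | h <;> rw [h] <;> norm_num

lemma abs_ee (a : ℤ) : |ee a| = 1 := by
  rcases ee_eq a with h | h <;> rw [h] <;> norm_num

lemma th_pos (N : ℕ) : 0 < th N := by
  unfold th; positivity

lemma th_mul (N : ℕ) : (2*(N:ℝ)+1) * th N = π := by
  unfold th; field_simp

lemma sinpos (N : ℕ) {x : ℝ} (h1 : 0 < x) (h2 : x < 2*(N:ℝ)+1) :
    0 < Real.sin (x * th N) := by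
  apply Real.sin_pos_of_pos_of_lt_pi
  · exact mul_pos h1 (th_pos N)
  · calc x * th N < (2*(N:ℝ)+1) * th N := by
          exact mul_lt_mul_of_pos_right h2 (th_pos N)
    _ = π := th_mul N

lemma sinnonneg (N : ℕ) {x : ℝ} (h1 : 0 ≤ x) (h2 : x ≤ 2*(N:ℝ)+1) :
    0 ≤ Real.sin (x * th N) := by
  apply Real.sin_nonneg_of_nonneg_of_le_pi
  · exact mul_nonneg h1 (th_pos N).le
  · calc x * th N ≤ (2*(N:ℝ)+1) * th N := by
          exact mul_le_mul_of_nonneg_right h2 (th_pos N).le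
    _ = π := th_mul N

lemma sinsin (a b : ℝ) : Real.sin a * Real.sin b = (Real.cos (a-b) - Real.cos (a+b))/2 := by
  rw [Real.cos_sub, Real.cos_add]; ring

lemma sqdiff (a b : ℝ) : Real.sin a ^ 2 - Real.sin b ^ 2 = Real.sin (a-b) * Real.sin (a+b) := by
  rw [Real.sin_sub, Real.sin_add]
  nlinarith [Real.sin_sq_add_cos_sq a, Real.sin_sq_add_cos_sq b]

lemma abs_sin_eq (N : ℕ) {x : ℝ} (hx : |x| ≤ 2*(N:ℝ)+1) :
    |Real.sin (x * th N)| = Real.sin (|x| * th N) := by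
  rcases le_or_gt 0 x with h | h
  · rw [abs_of_nonneg h, abs_of_nonneg (sinnonneg N h (by rwa [abs_of_nonneg h] at hx))]
  · rw [abs_of_neg h]
    rw [abs_of_neg h] at hx
    have : Real.sin (x * th N) ≤ 0 := by
      have := sinnonneg N (x := -x) (by linarith) hx
      rw [neg_mul, Real.sin_neg] at this; linarith
    rw [abs_of_nonpos this, ← Real.sin_neg, neg_mul]

section main
variable (N : ℕ) {α : ℝ}

lemma tt_pos (hα0 : 0 < α) (hα : α < 1/2) {j : ℤ} (h1 : 1 ≤ j) (h2 : j ≤ N) :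
    0 < tt N α j := by
  have hj1 : (1:ℝ) ≤ (j:ℝ) := by exact_mod_cast h1
  have hj2 : (j:ℝ) ≤ (N:ℝ) := by exact_mod_cast h2
  apply sinpos
  · rcases ee_eq j with h | h <;> rw [h] <;> nlinarith
  · rcases ee_eq j with h | h <;> rw [h] <;> nlinarith

lemma FF_pos (hα0 : 0 < α) (hα : α < 1/2) {j : ℤ} (h1 : 1 ≤ j) (h2 : j ≤ N) :
    0 < FF N α j := by
  have hj1 : (1:ℝ) ≤ (j:ℝ) := by exact_mod_cast h1
  have hj2 : (j:ℝ) ≤ (N:ℝ) := by exact_mod_cast h2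
  apply sinpos
  · rcases ee_eq j with h | h <;> rw [h] <;> nlinarith
  · rcases ee_eq j with h | h <;> rw [h] <;> nlinarith

end main

lemma pair_le (N : ℕ) {α : ℝ} (hα0 : 0 < α) (hα : α < 1/2) {j : ℤ} (hodd : Odd j)
    (h1 : 1 ≤ j) (hN : j + 1 ≤ N) :
    tt N α j * tt N α (j+1) ≤ FF N α j * FF N α (j+1) := by
  have hej : ee j = -1 := ee_odd hodd
  have hej1 : ee (j+1) = 1 := by
    rw [ee_add, hej, ee_odd (by exact odd_one)]; norm_num
  have hθ := th_pos N
  have hπ := th_mul N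
  have hNR : (2:ℝ) ≤ 2*(N:ℝ)+1 := by
    have : (1:ℝ) ≤ (N:ℝ) := by exact_mod_cast (by omega : (1:ℤ) ≤ N)
    linarith
  unfold tt FF
  rw [hej, hej1]
  push_cast
  set θ := th N with hth
  rw [sinsin, sinsin]
  have e1 : ((j:ℝ) + (-1)*α) * θ - ((j:ℝ)+1 + 1*α) * θ = -((1+2*α)*θ) := by ring
  have e2 : ((j:ℝ) + (-1)*α) * θ + ((j:ℝ)+1 + 1*α) * θ = (2*(j:ℝ)+1)*θ := by ring
  have e3 : ((j:ℝ) - (-1)*α) * θ - ((j:ℝ)+1 - 1*α) * θ = -((1-2*α)*θ) := by ring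
  have e4 : ((j:ℝ) - (-1)*α) * θ + ((j:ℝ)+1 - 1*α) * θ = (2*(j:ℝ)+1)*θ := by ring
  rw [e1, e2, e3, e4, Real.cos_neg, Real.cos_neg]
  have hcos : Real.cos ((1+2*α)*θ) ≤ Real.cos ((1-2*α)*θ) := by
    apply Real.cos_le_cos_of_nonneg_of_le_pi
    · nlinarith
    · nlinarith
    · nlinarith
  linarith

lemma single_le (N : ℕ) {α : ℝ} (hα0 : 0 < α) (hα : α < 1/2) {j : ℤ} (hodd : Odd j)
    (h1 : 1 ≤ j) (hN : j ≤ N) :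
    tt N α j ≤ FF N α j := by
  have hej : ee j = -1 := ee_odd hodd
  have hθ := th_pos N
  have hπ := th_mul N
  have hjR : (1:ℝ) ≤ (j:ℝ) := by exact_mod_cast h1
  have hjN : (j:ℝ) ≤ (N:ℝ) := by exact_mod_cast hN
  unfold tt FF
  rw [hej, ← sub_nonneg, Real.sin_sub_sin]
  have e1 : (((j:ℝ) - (-1)*α) * th N - ((j:ℝ) + (-1)*α) * th N)/2 = α * th N := by ring
  have e2 : (((j:ℝ) - (-1)*α) * th N + ((j:ℝ) + (-1)*α) * th N)/2 = (j:ℝ) * th N := by ring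
  rw [e1, e2]
  have hs : 0 ≤ Real.sin (α * th N) := (sinpos N hα0 (by nlinarith)).le
  have hc : 0 ≤ Real.cos ((j:ℝ) * th N) := by
    apply Real.cos_nonneg_of_mem_Icc
    constructor
    · nlinarith
    · nlinarith
  positivity

lemma ioc_pair (c : ℤ) : Finset.Ioc c (c+2) = {c+1, c+2} := by
  ext x; simp [Finset.mem_Ioc, Finset.mem_insert]; omega

lemma ioc_single (c : ℤ) : Finset.Ioc c (c+1) = {c+1} := by
  ext x; simp [Finset.mem_Ioc]; omega

lemma block_le (N : ℕ) {α : ℝ} (hα0 : 0 < α) (hα : α < 1/2) :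
    ∀ n : ℕ, ∀ c : ℤ, Even c → 0 ≤ c → c + n ≤ (N:ℤ) →
    (∏ j ∈ Finset.Ioc c (c + (n:ℤ)), tt N α j) ≤ ∏ j ∈ Finset.Ioc c (c + (n:ℤ)), FF N α j := by
  intro n
  induction n using Nat.strong_induction_on with
  | _ n ih =>
    match n with
    | 0 => intro c _ _ _; simp
    | 1 =>
      intro c hc h0 hN
      have : c + ((1:ℕ):ℤ) = c + 1 := by norm_num
      rw [this, ioc_single, Finset.prod_singleton, Finset.prod_singleton]
      exact single_le N hα0 hα hc.add_one (by omega) (by push_cast at hN ⊢; omega)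
    | (n+2) =>
      intro c hc h0 hN
      have hc2 : c + ((n+2:ℕ):ℤ) = (c+2) + (n:ℤ) := by push_cast; ring
      have hsplit : Finset.Ioc c (c + ((n+2:ℕ):ℤ)) =
          Finset.Ioc c (c+2) ∪ Finset.Ioc (c+2) ((c+2) + (n:ℤ)) := by
        rw [hc2, Finset.Ioc_union_Ioc_eq_Ioc (by omega) (by omega)]
      have hdisj : Disjoint (Finset.Ioc c (c+2)) (Finset.Ioc (c+2) ((c+2) + (n:ℤ))) := by
        simp only [Finset.disjoint_left, Finset.mem_Ioc]
        intro a ha hb; omega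
      have hNn : (c+2) + (n:ℤ) ≤ (N:ℤ) := by push_cast at hN; omega
      rw [hsplit, Finset.prod_union hdisj, Finset.prod_union hdisj, ioc_pair,
        Finset.prod_pair (by omega), Finset.prod_pair (by omega)]
      have hpair : tt N α (c+1) * tt N α (c+2) ≤ FF N α (c+1) * FF N α (c+2) := by
        have := pair_le N hα0 hα (j := c+1) hc.add_one (by omega) (by omega)
        simpa [add_assoc] using this
      have hblock := ih n (by omega) (c+2) (by exact hc.add (by decide)) (by omega) hNn
      apply mul_le_mul hpair hblock
      · apply Finset.prod_nonneg
        intro i hi; simp only [Finset.mem_Ioc] at hi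
        exact (tt_pos N hα0 hα (by omega) (by omega)).le
      · have h1 : 0 < FF N α (c+1) := FF_pos N hα0 hα (by omega) (by omega)
        have h2 : 0 < FF N α (c+2) := FF_pos N hα0 hα (by omega) (by omega)
        positivity

lemma node_zero (N : ℕ) (α : ℝ) : altNodes N α 0 = 0 := by simp [altNodes]

lemma node_pos (N : ℕ) (α : ℝ) {j : ℤ} (h : 0 < j) :
    altNodes N α j = ((j:ℝ) + ee j * α) * (2*π/(2*N+1)) := by
  unfold altNodes
  rw [if_neg (by omega)]
  by_cases he : Even j
  · rw [if_neg (by simp [he, Int.not_odd_iff_even.2 he]; omega), ee_even he]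
    ring
  · rw [if_pos (Or.inr ⟨Int.not_even_iff_odd.1 he, h⟩), ee_odd (Int.not_even_iff_odd.1 he)]
    ring

lemma node_neg (N : ℕ) (α : ℝ) {j : ℤ} (h : 0 < j) :
    altNodes N α (-j) = -(((j:ℝ) + ee j * α) * (2*π/(2*N+1))) := by
  unfold altNodes
  rw [if_neg (by omega)]
  by_cases he : Even j
  · rw [if_pos (Or.inl ⟨by simpa using he, by omega⟩), ee_even he]
    push_cast; ring
  · have ho : Odd j := Int.not_even_iff_odd.1 he
    rw [if_neg, ee_odd ho]
    · push_cast; ring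
    · rintro (⟨h1, _⟩ | ⟨_, h2⟩)
      · exact he (by simpa using h1)
      · omega

lemma fold (N : ℕ) (hN : 0 < N) {α : ℝ} (hα0 : 0 < α) (hα : α < 1/2) (k : ℤ) :
    ell0 N α ((k:ℝ) * (2*π/(2*N+1))) =
      ∏ j ∈ Finset.Ioc (0:ℤ) N,
        ((tt N α j)^2 - Real.sin ((k:ℝ) * th N)^2) / (tt N α j)^2 := by
  have hset : (Finset.Icc (-(N:ℤ)) N).erase 0 =
      (Finset.Ioc (0:ℤ) N) ∪ (Finset.Ioc (0:ℤ) N).image (fun j => -j) := by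
    ext x
    simp only [Finset.mem_erase, Finset.mem_Icc, Finset.mem_union, Finset.mem_Ioc,
      Finset.mem_image]
    constructor
    · rintro ⟨h1, h2, h3⟩
      rcases lt_or_gt_of_ne h1 with h | h
      · exact Or.inr ⟨-x, ⟨by omega, by omega⟩, by omega⟩
      · exact Or.inl ⟨h, h3⟩
    · rintro (⟨h1, h2⟩ | ⟨a, ⟨ha1, ha2⟩, rfl⟩)
      · exact ⟨by omega, by omega, h2⟩
      · exact ⟨by omega, by omega, by omega⟩
  have hdisj : Disjoint (Finset.Ioc (0:ℤ) N) ((Finset.Ioc (0:ℤ) N).image (fun j => -j)) := by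
    simp only [Finset.disjoint_left, Finset.mem_Ioc, Finset.mem_image]
    rintro a ⟨ha1, _⟩ ⟨b, ⟨hb1, _⟩, hba⟩
    omega
  rw [ell0, hset, Finset.prod_union hdisj,
    Finset.prod_image (fun a _ b _ h => by omega)]
  rw [← Finset.prod_mul_distrib]
  apply Finset.prod_congr rfl
  intro j hj
  simp only [Finset.mem_Ioc] at hj
  rw [node_pos N α hj.1, node_neg N α hj.1, node_zero]
  set b : ℝ := (j:ℝ) + ee j * α with hb
  have htt : tt N α j = Real.sin (b * th N) := rfl
  have httpos : 0 < Real.sin (b * th N) := by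
    rw [← htt]; exact tt_pos N hα0 hα (by omega) hj.2
  have e1 : ((k:ℝ) * (2*π/(2*N+1)) - b * (2*π/(2*N+1)))/2 = (k:ℝ) * th N - b * th N := by
    unfold th; ring
  have e2 : ((k:ℝ) * (2*π/(2*N+1)) - -(b * (2*π/(2*N+1))))/2 = (k:ℝ) * th N + b * th N := by
    unfold th; ring
  have e3 : ((0:ℝ) - b * (2*π/(2*N+1)))/2 = -(b * th N) := by unfold th; ring
  have e4 : ((0:ℝ) - -(b * (2*π/(2*N+1))))/2 = b * th N := by unfold th; ring
  rw [e1, e2, e3, e4, div_mul_div_comm, ← sqdiff, Real.sin_neg, htt]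
  rw [div_eq_div_iff (by nlinarith) (by positivity)]
  ring

lemma sin_m_lt (N : ℕ) {α : ℝ} (hα0 : 0 < α) (hα : α < 1/2) {m j : ℤ}
    (h1 : 1 ≤ m) (hm : m ≤ N) (hj1 : 1 ≤ j) (hj2 : j ≤ N)
    (hlt : (j:ℝ) + ee j * α < (m:ℝ)) :
    tt N α j < Real.sin ((m:ℝ) * th N) := by
  have hθ := th_pos N
  have hπ := th_mul N
  have hjR : (1:ℝ) ≤ (j:ℝ) := by exact_mod_cast hj1
  have hmN : (m:ℝ) ≤ (N:ℝ) := by exact_mod_cast hm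
  unfold tt
  apply Real.sin_lt_sin_of_lt_of_le_pi_div_two
  · rcases ee_eq j with h | h <;> rw [h] <;> nlinarith
  · nlinarith
  · exact mul_lt_mul_of_pos_right hlt hθ

lemma sin_m_gt (N : ℕ) {α : ℝ} (hα0 : 0 < α) (hα : α < 1/2) {m j : ℤ}
    (h1 : 1 ≤ m) (hm : m ≤ N) (hj1 : 1 ≤ j) (hj2 : j ≤ N)
    (hgt : (m:ℝ) < (j:ℝ) + ee j * α) :
    Real.sin ((m:ℝ) * th N) < tt N α j := by
  have hθ := th_pos N
  have hπ := th_mul N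
  have hm1 : (1:ℝ) ≤ (m:ℝ) := by exact_mod_cast h1
  have hjN : (j:ℝ) ≤ (N:ℝ) := by exact_mod_cast hj2
  unfold tt
  apply Real.sin_lt_sin_of_lt_of_le_pi_div_two
  · nlinarith
  · rcases ee_eq j with h | h <;> rw [h] <;> nlinarith
  · exact mul_lt_mul_of_pos_right hgt hθ

lemma sign_le (N : ℕ) {α : ℝ} (hα0 : 0 < α) (hα : α < 1/2) {m : ℤ}
    (h1 : 1 ≤ m) (hm : m ≤ N) :
    (∏ j ∈ Finset.Ioc (0:ℤ) N,
      ((tt N α j)^2 - Real.sin ((m:ℝ) * th N)^2) / (tt N α j)^2) ≤ 0 := by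
  set S := Real.sin ((m:ℝ) * th N) with hS
  set w : ℤ → ℝ := fun j => ((tt N α j)^2 - S^2) / (tt N α j)^2 with hw
  set c : ℤ := if Even m then m - 1 else m with hc
  have hcodd : Odd c := by
    by_cases h : Even m
    · rw [hc, if_pos h]; obtain ⟨r, hr⟩ := h; exact ⟨r - 1, by omega⟩
    · rw [hc, if_neg h]; exact Int.not_even_iff_odd.1 h
  have hc0 : 0 ≤ c := by rw [hc]; split <;> omega
  have hcN : c ≤ N := by rw [hc]; split <;> omega
  have hSpos : 0 < S := by
    rw [hS]
    apply sinpos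
    · exact_mod_cast lt_of_lt_of_le zero_lt_one h1
    · have : (m:ℝ) ≤ (N:ℝ) := by exact_mod_cast hm
      linarith
  have hneg : ∀ j ∈ Finset.Ioc (0:ℤ) c, w j < 0 := by
    intro j hj
    simp only [Finset.mem_Ioc] at hj
    have hjN : j ≤ (N:ℤ) := le_trans hj.2 hcN
    have htpos := tt_pos N hα0 hα (by omega) hjN
    have hlt : tt N α j < S := by
      apply sin_m_lt N hα0 hα h1 hm (by omega) hjN
      by_cases hjm : j < m
      · have : (j:ℝ) ≤ (m:ℝ) - 1 := by exact_mod_cast (by omega : j ≤ m - 1)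
        rcases ee_eq j with h | h <;> rw [h] <;> nlinarith
      · have hjm' : j = m := by
          rcases Int.even_or_odd m with h | h
          · exfalso; rw [hc, if_pos h] at hj; omega
          · rw [hc, if_neg (Int.not_even_iff_odd.2 h)] at hj; omega
        subst hjm'
        have hodd : Odd j := by
          rcases Int.even_or_odd j with h | h
          · exfalso; rw [hc, if_pos h] at hj; omega
          · exact h
        rw [ee_odd hodd]; nlinarith
    have : (tt N α j)^2 < S^2 := by nlinarith
    exact div_neg_of_neg_of_pos (by linarith) (by positivity)
  have hpos : ∀ j ∈ Finset.Ioc c (N:ℤ), 0 < w j := by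
    intro j hj
    simp only [Finset.mem_Ioc] at hj
    have hj1 : 1 ≤ j := by omega
    have htpos := tt_pos N hα0 hα hj1 hj.2
    have hgt : S < tt N α j := by
      apply sin_m_gt N hα0 hα h1 hm hj1 hj.2
      by_cases hjm : m < j
      · have : (m:ℝ) + 1 ≤ (j:ℝ) := by exact_mod_cast (by omega : m + 1 ≤ j)
        rcases ee_eq j with h | h <;> rw [h] <;> nlinarith
      · have hjm' : j = m := by
          rcases Int.even_or_odd m with h | h
          · rw [hc, if_pos h] at hj; omega
          · exfalso; rw [hc, if_neg (Int.not_even_iff_odd.2 h)] at hj; omega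
        subst hjm'
        have heven : Even j := by
          rcases Int.even_or_odd j with h | h
          · exact h
          · exfalso; rw [hc, if_neg (Int.not_even_iff_odd.2 h)] at hj; omega
        rw [ee_even heven]; nlinarith
    have : S^2 < (tt N α j)^2 := by nlinarith
    exact div_pos (by linarith) (by positivity)
  have hsplit : Finset.Ioc (0:ℤ) N = Finset.Ioc 0 c ∪ Finset.Ioc c N :=
    (Finset.Ioc_union_Ioc_eq_Ioc hc0 hcN).symm
  have hdisj : Disjoint (Finset.Ioc (0:ℤ) c) (Finset.Ioc c (N:ℤ)) := by
    simp only [Finset.disjoint_left, Finset.mem_Ioc]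
    intro a ha hb; omega
  rw [hsplit, Finset.prod_union hdisj]
  apply mul_nonpos_of_nonpos_of_nonneg
  · have hrw : (∏ j ∈ Finset.Ioc (0:ℤ) c, w j)
        = (-1)^(Finset.Ioc (0:ℤ) c).card * ∏ j ∈ Finset.Ioc (0:ℤ) c, (-(w j)) := by
      rw [← Finset.prod_const, ← Finset.prod_mul_distrib]
      apply Finset.prod_congr rfl
      intro j _; ring
    rw [hrw]
    have hcard : Odd (Finset.Ioc (0:ℤ) c).card := by
      rw [Int.card_Ioc]
      obtain ⟨r, hr⟩ := hcodd
      exact ⟨r.toNat, by omega⟩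
    rw [hcard.neg_one_pow]
    have : 0 ≤ ∏ j ∈ Finset.Ioc (0:ℤ) c, (-(w j)) :=
      Finset.prod_nonneg (fun j hj => by linarith [hneg j hj])
    linarith
  · exact (Finset.prod_pos hpos).le

lemma ee_two_n (N : ℕ) : ee (2*(N:ℤ)+1) = -1 := by
  rw [ee_add, ee_even ⟨(N:ℤ), by ring⟩, ee_odd odd_one]; norm_num

lemma iocdisj (a b c : ℤ) : Disjoint (Finset.Ioc a b) (Finset.Ioc b c) := by
  simp only [Finset.disjoint_left, Finset.mem_Ioc]
  intro x hx hy
  omega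

lemma splitA {a b c : ℤ} (hab : a ≤ b) (hbc : b ≤ c) (f : ℤ → ℝ) :
    (∏ j ∈ Finset.Ioc a c, f j)
      = (∏ j ∈ Finset.Ioc a b, f j) * ∏ j ∈ Finset.Ioc b c, f j := by
  rw [← Finset.prod_union (iocdisj a b c), Finset.Ioc_union_Ioc_eq_Ioc hab hbc]

lemma mag_le (N : ℕ) {α : ℝ} (hα0 : 0 < α) (hα : α < 1/2) {m : ℤ}
    (h1 : 1 ≤ m) (hm : m ≤ N) :
    Real.sin (α * th N) * ∏ j ∈ Finset.Ioc (0:ℤ) N, (tt N α j)^2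
    ≤ Real.sin (((m:ℝ) + α) * th N) *
        ∏ j ∈ Finset.Ioc (0:ℤ) N, |(tt N α j)^2 - Real.sin ((m:ℝ) * th N)^2| := by
  have hθ := th_pos N
  have hπ := th_mul N
  have hmR : (1:ℝ) ≤ (m:ℝ) := by exact_mod_cast h1
  have hmN : (m:ℝ) ≤ (N:ℝ) := by exact_mod_cast hm
  have hNR : (1:ℝ) ≤ (N:ℝ) := le_trans hmR hmN
  -- step 1: per-factor identity
  have step1 : ∀ j ∈ Finset.Ioc (0:ℤ) N,
      |(tt N α j)^2 - Real.sin ((m:ℝ) * th N)^2| =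
      Real.sin (|(m:ℝ) - (j:ℝ) - ee j * α| * th N) *
        Real.sin (((m:ℝ) + ((j:ℝ) + ee j * α)) * th N) := by
    intro j hj
    simp only [Finset.mem_Ioc] at hj
    have hjR : (1:ℝ) ≤ (j:ℝ) := by exact_mod_cast hj.1
    have hjN : (j:ℝ) ≤ (N:ℝ) := by exact_mod_cast hj.2
    set b : ℝ := (j:ℝ) + ee j * α with hb
    have hee := ee_eq j
    have hb1 : 1 - α ≤ b := by rcases hee with h | h <;> rw [hb, h] <;> nlinarith
    have hb2 : b ≤ (N:ℝ) + α := by rcases hee with h | h <;> rw [hb, h] <;> nlinarith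
    have e0 : (tt N α j)^2 - Real.sin ((m:ℝ) * th N)^2
        = Real.sin ((b - (m:ℝ)) * th N) * Real.sin ((b + (m:ℝ)) * th N) := by
      have h' := sqdiff (b * th N) ((m:ℝ) * th N)
      rw [show b * th N - (m:ℝ) * th N = (b - (m:ℝ)) * th N by ring,
        show b * th N + (m:ℝ) * th N = (b + (m:ℝ)) * th N by ring] at h'
      exact h'
    rw [e0, abs_mul]
    have h2 : |Real.sin ((b + (m:ℝ)) * th N)| = Real.sin ((b + (m:ℝ)) * th N) :=
      abs_of_pos (sinpos N (by linarith) (by linarith))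
    have h3 : |Real.sin ((b - (m:ℝ)) * th N)| = Real.sin (|b - (m:ℝ)| * th N) :=
      abs_sin_eq N (by rw [abs_le]; constructor <;> nlinarith)
    rw [h2, h3, abs_sub_comm, show (m:ℝ) - b = (m:ℝ) - (j:ℝ) - ee j * α by rw [hb]; ring,
      show b + (m:ℝ) = (m:ℝ) + b by ring]
  rw [Finset.prod_congr rfl step1, Finset.prod_mul_distrib]
  have hsingle : Finset.Ioc (m-1) m = {m} := by
    have h' := ioc_single (m-1); rw [show m - 1 + 1 = m by ring] at h'; exact h'
  -- PA decomposition
  have hAm : |(m:ℝ) - (m:ℝ) - ee m * α| = α := by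
    rw [show (m:ℝ) - (m:ℝ) - ee m * α = -(ee m * α) by ring, abs_neg, abs_mul, abs_ee,
      one_mul, abs_of_pos hα0]
  have hA1 : (∏ j ∈ Finset.Ioc (0:ℤ) (m-1), Real.sin (|(m:ℝ) - (j:ℝ) - ee j * α| * th N))
      = ∏ d ∈ Finset.Ioc (0:ℤ) (m-1), Real.sin (((d:ℝ) - ee m * ee d * α) * th N) := by
    apply Finset.prod_nbij' (fun j => m - j) (fun d => m - d)
    · intro a ha; simp only [Finset.mem_Ioc] at *; omega
    · intro a ha; simp only [Finset.mem_Ioc] at *; omega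
    · intro a _; ring
    · intro a _; ring
    · intro j hj
      simp only [Finset.mem_Ioc] at hj
      have hjm : (j:ℝ) + 1 ≤ (m:ℝ) := by exact_mod_cast (by omega : j + 1 ≤ m)
      have harg : |(m:ℝ) - (j:ℝ) - ee j * α| = (m:ℝ) - (j:ℝ) - ee j * α := by
        apply abs_of_pos
        rcases ee_eq j with h | h <;> rw [h] <;> nlinarith
      rw [harg, ee_sub]
      congr 1
      push_cast
      linear_combination (th N * α * ee j) * ee_mul_self m
  have hA3 : (∏ j ∈ Finset.Ioc m (N:ℤ), Real.sin (|(m:ℝ) - (j:ℝ) - ee j * α| * th N))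
      = ∏ d ∈ Finset.Ioc (0:ℤ) (N-m), Real.sin (((d:ℝ) + ee m * ee d * α) * th N) := by
    apply Finset.prod_nbij' (fun j => j - m) (fun d => d + m)
    · intro a ha; simp only [Finset.mem_Ioc] at *; omega
    · intro a ha; simp only [Finset.mem_Ioc] at *; omega
    · intro a _; ring
    · intro a _; ring
    · intro j hj
      simp only [Finset.mem_Ioc] at hj
      have hjm : (m:ℝ) + 1 ≤ (j:ℝ) := by exact_mod_cast (by omega : m + 1 ≤ j)
      have harg : |(m:ℝ) - (j:ℝ) - ee j * α| = (j:ℝ) + ee j * α - (m:ℝ) := by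
        rw [show (m:ℝ) - (j:ℝ) - ee j * α = -((j:ℝ) + ee j * α - (m:ℝ)) by ring, abs_neg]
        apply abs_of_pos
        rcases ee_eq j with h | h <;> rw [h] <;> nlinarith
      rw [harg, ee_sub]
      congr 1
      push_cast
      linear_combination (- th N * α * ee j) * ee_mul_self m
  have hPA : (∏ j ∈ Finset.Ioc (0:ℤ) N, Real.sin (|(m:ℝ) - (j:ℝ) - ee j * α| * th N))
      = (∏ d ∈ Finset.Ioc (0:ℤ) (m-1), Real.sin (((d:ℝ) - ee m * ee d * α) * th N))
        * Real.sin (α * th N)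
        * ∏ d ∈ Finset.Ioc (0:ℤ) (N-m), Real.sin (((d:ℝ) + ee m * ee d * α) * th N) := by
    rw [splitA (by omega : (0:ℤ) ≤ m-1) (by omega : m-1 ≤ (N:ℤ)),
      splitA (by omega : m-1 ≤ m) (by omega : m ≤ (N:ℤ)), hsingle, Finset.prod_singleton,
      hAm, hA1, hA3]
    ring
  -- PB decomposition
  have hB1 : (∏ j ∈ Finset.Ioc (0:ℤ) (N-m),
        Real.sin (((m:ℝ) + ((j:ℝ) + ee j * α)) * th N))
      = ∏ n ∈ Finset.Ioc m (N:ℤ), Real.sin (((n:ℝ) + ee m * ee n * α) * th N) := by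
    apply Finset.prod_nbij' (fun j => j + m) (fun n => n - m)
    · intro a ha; simp only [Finset.mem_Ioc] at *; omega
    · intro a ha; simp only [Finset.mem_Ioc] at *; omega
    · intro a _; ring
    · intro a _; ring
    · intro j hj
      rw [ee_add]
      congr 1
      push_cast
      linear_combination (- th N * α * ee j) * ee_mul_self m
  have hB2 : (∏ j ∈ Finset.Ioc (N-m) (N:ℤ),
        Real.sin (((m:ℝ) + ((j:ℝ) + ee j * α)) * th N))
      = ∏ n ∈ Finset.Ioc (N-m) (N:ℤ), Real.sin (((n:ℝ) + ee m * ee n * α) * th N) := by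
    have hrefl : ∀ j ∈ Finset.Ioc (N-m) (N:ℤ),
        Real.sin (((m:ℝ) + ((j:ℝ) + ee j * α)) * th N)
          = Real.sin ((2*(N:ℝ)+1 - (m:ℝ) - (j:ℝ) - ee j * α) * th N) := by
      intro j _
      rw [show (2*(N:ℝ)+1 - (m:ℝ) - (j:ℝ) - ee j * α) * th N
          = π - ((m:ℝ) + ((j:ℝ) + ee j * α)) * th N by rw [← hπ]; ring, Real.sin_pi_sub]
    rw [Finset.prod_congr rfl hrefl]
    apply Finset.prod_nbij' (fun j => 2*(N:ℤ)+1 - m - j) (fun n => 2*(N:ℤ)+1 - m - n)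
    · intro a ha; simp only [Finset.mem_Ioc] at *; omega
    · intro a ha; simp only [Finset.mem_Ioc] at *; omega
    · intro a _; ring
    · intro a _; ring
    · intro j hj
      have hee2 : ee (2*(N:ℤ)+1 - m - j) = -(ee m * ee j) := by
        rw [ee_sub, ee_sub, ee_two_n]; ring
      rw [hee2]
      congr 1
      push_cast
      linear_combination (th N * α * ee j) * ee_mul_self m
  have hPB : (∏ j ∈ Finset.Ioc (0:ℤ) N,
        Real.sin (((m:ℝ) + ((j:ℝ) + ee j * α)) * th N))
      = (∏ n ∈ Finset.Ioc m (N:ℤ), Real.sin (((n:ℝ) + ee m * ee n * α) * th N))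
        * ∏ n ∈ Finset.Ioc (N-m) (N:ℤ), Real.sin (((n:ℝ) + ee m * ee n * α) * th N) := by
    rw [splitA (by omega : (0:ℤ) ≤ N-m) (by omega : N-m ≤ (N:ℤ)), hB1, hB2]
  rw [hPA, hPB]
  -- positivity of subproducts
  have ttpos : ∀ (a b : ℤ), 0 ≤ a → b ≤ N → 0 < ∏ j ∈ Finset.Ioc a b, tt N α j := by
    intro a b ha hb
    apply Finset.prod_pos
    intro j hj; simp only [Finset.mem_Ioc] at hj
    exact tt_pos N hα0 hα (by omega) (by omega)
  have FFpos : ∀ (a b : ℤ), 0 ≤ a → b ≤ N → 0 < ∏ j ∈ Finset.Ioc a b, FF N α j := by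
    intro a b ha hb
    apply Finset.prod_pos
    intro j hj; simp only [Finset.mem_Ioc] at hj
    exact FF_pos N hα0 hα (by omega) (by omega)
  have hsa : 0 < Real.sin (α * th N) := sinpos N hα0 (by nlinarith)
  -- expand LHS of goal
  have hLHS : (∏ j ∈ Finset.Ioc (0:ℤ) N, (tt N α j)^2)
      = ((∏ j ∈ Finset.Ioc (0:ℤ) (m-1), tt N α j)
          * (tt N α m * ∏ j ∈ Finset.Ioc m (N:ℤ), tt N α j))
        * ((∏ j ∈ Finset.Ioc (0:ℤ) (N-m), tt N α j)
          * ∏ j ∈ Finset.Ioc (N-m) (N:ℤ), tt N α j) := by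
    rw [Finset.prod_pow, sq]
    nth_rewrite 1 [splitA (by omega : (0:ℤ) ≤ m-1) (by omega : m-1 ≤ (N:ℤ)) (tt N α),
      splitA (by omega : m-1 ≤ m) (by omega : m ≤ (N:ℤ)) (tt N α), hsingle,
      Finset.prod_singleton]
    rw [splitA (by omega : (0:ℤ) ≤ N-m) (by omega : N-m ≤ (N:ℤ)) (tt N α)]
  rw [hLHS]
  rcases Int.even_or_odd m with hme | hmo
  · -- m even
    have heem : ee m = 1 := ee_even hme
    have eA1 : (∏ d ∈ Finset.Ioc (0:ℤ) (m-1), Real.sin (((d:ℝ) - ee m * ee d * α) * th N))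
        = ∏ d ∈ Finset.Ioc (0:ℤ) (m-1), FF N α d := by
      refine Finset.prod_congr rfl fun d _ => ?_
      unfold FF; rw [heem, one_mul]
    have eA3 : (∏ d ∈ Finset.Ioc (0:ℤ) (N-m), Real.sin (((d:ℝ) + ee m * ee d * α) * th N))
        = ∏ d ∈ Finset.Ioc (0:ℤ) (N-m), tt N α d := by
      refine Finset.prod_congr rfl fun d _ => ?_
      unfold tt; rw [heem, one_mul]
    have eB1 : (∏ n ∈ Finset.Ioc m (N:ℤ), Real.sin (((n:ℝ) + ee m * ee n * α) * th N))
        = ∏ n ∈ Finset.Ioc m (N:ℤ), tt N α n := by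
      refine Finset.prod_congr rfl fun d _ => ?_
      unfold tt; rw [heem, one_mul]
    have eB2 : (∏ n ∈ Finset.Ioc (N-m) (N:ℤ), Real.sin (((n:ℝ) + ee m * ee n * α) * th N))
        = ∏ n ∈ Finset.Ioc (N-m) (N:ℤ), tt N α n := by
      refine Finset.prod_congr rfl fun d _ => ?_
      unfold tt; rw [heem, one_mul]
    have esm : Real.sin (((m:ℝ) + α) * th N) = tt N α m := by
      unfold tt; rw [heem, one_mul]
    rw [eA1, eA3, eB1, eB2, esm]
    set sa := Real.sin (α * th N) with hsadef
    set Ta := ∏ j ∈ Finset.Ioc (0:ℤ) (m-1), tt N α j with hTa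
    set Fa := ∏ j ∈ Finset.Ioc (0:ℤ) (m-1), FF N α j with hFa
    set Tc := ∏ j ∈ Finset.Ioc m (N:ℤ), tt N α j with hTc
    set Td := ∏ j ∈ Finset.Ioc (0:ℤ) (N-m), tt N α j with hTd
    set Te := ∏ j ∈ Finset.Ioc (N-m) (N:ℤ), tt N α j with hTe
    set tm := tt N α m with htm
    clear_value sa Ta Fa Tc Td Te tm
    have block1 : Ta ≤ Fa := by
      have hb := block_le N hα0 hα (m-1).toNat 0 Even.zero le_rfl (by omega)
      rw [show (0:ℤ) + ((m-1).toNat : ℤ) = m - 1 by omega] at hb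
      rw [hTa, hFa]; exact hb
    have hTcpos : 0 < Tc := by rw [hTc]; exact ttpos m N (by omega) (by omega)
    have hTdpos : 0 < Td := by rw [hTd]; exact ttpos 0 (N-m) (by omega) (by omega)
    have hTepos : 0 < Te := by rw [hTe]; exact ttpos (N-m) N (by omega) (by omega)
    have htmpos : 0 < tm := by rw [htm]; exact tt_pos N hα0 hα h1 hm
    calc sa * (Ta * (tm * Tc) * (Td * Te))
        = (sa * (tm * Tc) * (Td * Te)) * Ta := by ring
      _ ≤ (sa * (tm * Tc) * (Td * Te)) * Fa :=
          mul_le_mul_of_nonneg_left block1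
            (mul_pos (mul_pos hsa (mul_pos htmpos hTcpos)) (mul_pos hTdpos hTepos)).le
      _ = tm * (Fa * sa * Td * (Tc * Te)) := by ring
  · -- m odd
    have heem : ee m = -1 := ee_odd hmo
    have eA1 : (∏ d ∈ Finset.Ioc (0:ℤ) (m-1), Real.sin (((d:ℝ) - ee m * ee d * α) * th N))
        = ∏ d ∈ Finset.Ioc (0:ℤ) (m-1), tt N α d := by
      refine Finset.prod_congr rfl fun d _ => ?_
      unfold tt; rw [heem]; congr 1; ring
    have eA3 : (∏ d ∈ Finset.Ioc (0:ℤ) (N-m), Real.sin (((d:ℝ) + ee m * ee d * α) * th N))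
        = ∏ d ∈ Finset.Ioc (0:ℤ) (N-m), FF N α d := by
      refine Finset.prod_congr rfl fun d _ => ?_
      unfold FF; rw [heem]; congr 1; ring
    have eB1 : (∏ n ∈ Finset.Ioc m (N:ℤ), Real.sin (((n:ℝ) + ee m * ee n * α) * th N))
        = ∏ n ∈ Finset.Ioc m (N:ℤ), FF N α n := by
      refine Finset.prod_congr rfl fun d _ => ?_
      unfold FF; rw [heem]; congr 1; ring
    have eB2 : (∏ n ∈ Finset.Ioc (N-m) (N:ℤ), Real.sin (((n:ℝ) + ee m * ee n * α) * th N))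
        = ∏ n ∈ Finset.Ioc (N-m) (N:ℤ), FF N α n := by
      refine Finset.prod_congr rfl fun d _ => ?_
      unfold FF; rw [heem]; congr 1; ring
    have esm : Real.sin (((m:ℝ) + α) * th N) = FF N α m := by
      unfold FF; rw [heem]; congr 1; ring
    rw [eA1, eA3, eB1, eB2, esm]
    set sa := Real.sin (α * th N) with hsadef
    set Ta := ∏ j ∈ Finset.Ioc (0:ℤ) (m-1), tt N α j with hTa
    set Tc := ∏ j ∈ Finset.Ioc m (N:ℤ), tt N α j with hTc
    set Td := ∏ j ∈ Finset.Ioc (0:ℤ) (N-m), tt N α j with hTd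
    set Te := ∏ j ∈ Finset.Ioc (N-m) (N:ℤ), tt N α j with hTe
    set tm := tt N α m with htm
    set Fm := FF N α m with hFm
    set Fc := ∏ j ∈ Finset.Ioc m (N:ℤ), FF N α j with hFc
    set Fd := ∏ j ∈ Finset.Ioc (0:ℤ) (N-m), FF N α j with hFd
    set Fe := ∏ j ∈ Finset.Ioc (N-m) (N:ℤ), FF N α j with hFe
    set Tb := ∏ j ∈ Finset.Ioc (m-1) (N:ℤ), tt N α j with hTb
    set Fb := ∏ j ∈ Finset.Ioc (m-1) (N:ℤ), FF N α j with hFb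
    set T0 := ∏ j ∈ Finset.Ioc (0:ℤ) (N:ℤ), tt N α j with hT0
    set F0 := ∏ j ∈ Finset.Ioc (0:ℤ) (N:ℤ), FF N α j with hF0
    have eTb : Tb = tm * Tc := by
      rw [hTb, htm, hTc, splitA (by omega : m-1 ≤ m) (by omega : m ≤ (N:ℤ)) (tt N α),
        hsingle, Finset.prod_singleton]
    have eFb : Fb = Fm * Fc := by
      rw [hFb, hFm, hFc, splitA (by omega : m-1 ≤ m) (by omega : m ≤ (N:ℤ)) (FF N α),
        hsingle, Finset.prod_singleton]
    have eT0 : T0 = Td * Te := by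
      rw [hT0, hTd, hTe]
      exact splitA (by omega) (by omega) (tt N α)
    have eF0 : F0 = Fd * Fe := by
      rw [hF0, hFd, hFe]
      exact splitA (by omega) (by omega) (FF N α)
    have block2 : T0 ≤ F0 := by
      have hb := block_le N hα0 hα N 0 Even.zero le_rfl (by omega)
      rw [show (0:ℤ) + ((N:ℕ) : ℤ) = (N:ℤ) by omega] at hb
      rw [hT0, hF0]; exact hb
    have block3 : Tb ≤ Fb := by
      have hevc : Even (m-1) := by
        obtain ⟨r, hr⟩ := hmo; exact ⟨r, by omega⟩
      have hb := block_le N hα0 hα (N - m + 1).toNat (m-1) hevc (by omega) (by omega)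
      rw [show m - 1 + ((N - m + 1).toNat : ℤ) = (N:ℤ) by omega] at hb
      rw [hTb, hFb]; exact hb
    have hTapos : 0 < Ta := ttpos 0 (m-1) (by omega) (by omega)
    have hT0pos : 0 < T0 := ttpos 0 N (by omega) (by omega)
    have hFbpos : 0 < Fb := FFpos (m-1) N (by omega) (by omega)
    have key : tm * Tc * (Td * Te) ≤ Fm * Fc * (Fd * Fe) := by
      have h' : Tb * T0 ≤ Fb * F0 := mul_le_mul block3 block2 hT0pos.le hFbpos.le
      rw [eTb, eT0, eFb, eF0] at h'
      exact h'
    calc sa * (Ta * (tm * Tc) * (Td * Te))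
        = (sa * Ta) * (tm * Tc * (Td * Te)) := by ring
      _ ≤ (sa * Ta) * (Fm * Fc * (Fd * Fe)) :=
          mul_le_mul_of_nonneg_left key (mul_pos hsa hTapos).le
      _ = Fm * (Ta * sa * Fd * (Fc * Fe)) := by ring


/-- sign and lower bound for the values of the Lagrange polynomial `ℓ₀` of the
alternating maximally perturbed grid at the unperturbed grid points. -/
theorem ell0_sign_and_lower_bound (α : ℝ) (hα0 : 0 < α) (hα : α < 1/2)
    (N : ℕ) (hN : 0 < N) (hNe : Even N)
    (k : ℤ) (hk : k ∈ Finset.Icc (-(N:ℤ)) (N:ℤ)) (hk0 : k ≠ 0) :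
    ell0 N α ((k : ℝ) * (2*π/(2*N+1))) ≤ 0 ∧
    Real.sin (α * (2*π/(2*N+1)) / 2) /
        Real.sin ((|(k : ℝ)| + α) * (2*π/(2*N+1)) / 2) ≤
      |ell0 N α ((k : ℝ) * (2*π/(2*N+1)))| := by
  rw [Finset.mem_Icc] at hk
  set m : ℤ := |k| with hmdef
  have hm1 : 1 ≤ m := hmdef ▸ Int.one_le_abs hk0
  have hmN : m ≤ (N:ℤ) := hmdef ▸ abs_le.mpr ⟨hk.1, hk.2⟩
  have hSeq : Real.sin ((k:ℝ) * th N)^2 = Real.sin ((m:ℝ) * th N)^2 := by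
    rcases abs_choice k with h | h
    · rw [hmdef, h]
    · rw [hmdef, h]
      push_cast
      rw [neg_mul, Real.sin_neg]
      ring
  have hfold := fold N hN hα0 hα k
  rw [hSeq] at hfold
  have hmRpos : (0:ℝ) < (m:ℝ) + α := by
    have : (1:ℝ) ≤ (m:ℝ) := by exact_mod_cast hm1
    linarith
  have hmRN : (m:ℝ) ≤ (N:ℝ) := by exact_mod_cast hmN
  have hden1 : 0 < Real.sin (((m:ℝ) + α) * th N) :=
    sinpos N hmRpos (by linarith)
  constructor
  · rw [hfold]
    exact sign_le N hα0 hα hm1 hmN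
  · rw [hfold, Finset.abs_prod]
    have e1 : α * (2*π/(2*(N:ℝ)+1)) / 2 = α * th N := by unfold th; ring
    have e2 : (|(k:ℝ)| + α) * (2*π/(2*(N:ℝ)+1)) / 2 = ((m:ℝ) + α) * th N := by
      rw [show |(k:ℝ)| = ((m:ℤ):ℝ) by rw [hmdef, Int.cast_abs]]
      unfold th; ring
    rw [e1, e2]
    have habs : ∀ j ∈ Finset.Ioc (0:ℤ) N,
        |((tt N α j)^2 - Real.sin ((m:ℝ) * th N)^2) / (tt N α j)^2|
          = |(tt N α j)^2 - Real.sin ((m:ℝ) * th N)^2| / (tt N α j)^2 := by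
      intro j hj
      rw [abs_div, abs_of_nonneg (sq_nonneg (tt N α j))]
    rw [Finset.prod_congr rfl habs, Finset.prod_div_distrib]
    have hden2 : 0 < ∏ j ∈ Finset.Ioc (0:ℤ) N, (tt N α j)^2 := by
      apply Finset.prod_pos
      intro j hj
      simp only [Finset.mem_Ioc] at hj
      exact pow_pos (tt_pos N hα0 hα (by omega) (by omega)) 2
    rw [div_le_div_iff₀ hden1 hden2]
    calc Real.sin (α * th N) * ∏ j ∈ Finset.Ioc (0:ℤ) N, (tt N α j)^2
        ≤ Real.sin (((m:ℝ) + α) * th N) *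
            ∏ j ∈ Finset.Ioc (0:ℤ) N, |(tt N α j)^2 - Real.sin ((m:ℝ) * th N)^2| :=
          mag_le N hα0 hα hm1 hmN
      _ = (∏ j ∈ Finset.Ioc (0:ℤ) N, |(tt N α j)^2 - Real.sin ((m:ℝ) * th N)^2|) *
            Real.sin (((m:ℝ) + α) * th N) := mul_comm _ _
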